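/- Let X = {u ∈ L²₀(S²) : (u, Y_n^0) = 0 for all n ≥ 1 and (u, Y_1^{±1}) = 0} and Λ = −i∂_φ M_{cos θ}(I + 6Δ^{−1}) restricted to X. Then the kernel of Λ in X equals span{Y_2^m : |m| = 1, 2}. -/

import Mathlib

open Real

/-- Eigenvalue `λ_n = n(n+1)` of `−Δ` on the unit sphere `S²`. -/
def lam (n : ℕ) : ℝ := n * (n + 1)

/-- The recurrence coefficient `a_n^m = √((n−m)(n+m)/((2n−1)(2n+1)))` in
`cos θ · Y_n^m = a_n^m Y_{n−1}^m + a_{n+1}^m Y_{n+1}^m`. -/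
noncomputable def aCoef (n : ℕ) (m : ℤ) : ℝ :=
  Real.sqrt ((((n : ℝ) - (m : ℝ)) * ((n : ℝ) + (m : ℝ))) / ((2 * (n : ℝ) - 1) * (2 * (n : ℝ) + 1)))

lemma lam_ge {n : ℕ} (hn : 1 ≤ n) : (2:ℝ) ≤ lam n := by
  unfold lam
  have h : (1:ℝ) ≤ (n:ℝ) := by exact_mod_cast hn
  nlinarith

lemma lamfac_ne {n : ℕ} (hn : 1 ≤ n) (h2 : n ≠ 2) : (1 : ℝ) - 6 / lam n ≠ 0 := by
  have h := lam_ge hn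
  have hne : lam n ≠ 6 := by
    unfold lam
    intro hcon
    have h6 : n * (n+1) = 6 := by exact_mod_cast hcon
    have hle : n ≤ 6 := by nlinarith
    interval_cases n <;> omega
  intro hh
  apply hne
  have hpos : (0:ℝ) < lam n := by linarith
  field_simp at hh
  linarith

lemma lam_two : lam 2 = 6 := by norm_num [lam]

lemma lamfac_abs_le {n : ℕ} (hn : 1 ≤ n) : |1 - 6 / lam n| ≤ 4 := by
  have h := lam_ge hn
  have h1 : 6 / lam n ≤ 3 := by
    rw [div_le_iff₀ (by linarith)]; linarith
  have h2 : 0 ≤ 6 / lam n := by positivity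
  rw [abs_le]; constructor <;> linarith

lemma aCoef_nonneg (n : ℕ) (m : ℤ) : 0 ≤ aCoef n m := Real.sqrt_nonneg _

lemma natAbs_cast_abs (m : ℤ) : |(m:ℝ)| = (m.natAbs : ℝ) := by
  rw [Nat.cast_natAbs, ← Int.cast_abs]

lemma aCoef_pos {n : ℕ} {m : ℤ} (h : m.natAbs < n) : 0 < aCoef n m := by
  have hn : 1 ≤ n := lt_of_le_of_lt (Nat.zero_le _) h
  have hn1 : (1:ℝ) ≤ (n:ℝ) := by exact_mod_cast hn
  have habs : |(m:ℝ)| < (n:ℝ) := by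
    rw [natAbs_cast_abs]; exact_mod_cast h
  have h1 : (m:ℝ) < n := (abs_lt.mp habs).2
  have h2 : -(n:ℝ) < m := (abs_lt.mp habs).1
  apply Real.sqrt_pos.mpr
  apply div_pos
  · nlinarith
  · nlinarith

lemma aCoef_le_half {n : ℕ} {m : ℤ} (hm : m ≠ 0) (hn : 1 ≤ n) : aCoef n m ≤ 1/2 := by
  have hn1 : (1:ℝ) ≤ (n:ℝ) := by exact_mod_cast hn
  have hm1 : (1:ℝ) ≤ (m:ℝ)^2 := by
    have : 1 ≤ m.natAbs := Int.natAbs_pos.mpr hm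
    have : (1:ℝ) ≤ |(m:ℝ)| := by rw [natAbs_cast_abs]; exact_mod_cast this
    nlinarith [abs_nonneg (m:ℝ), sq_abs (m:ℝ)]
  have key : (((n : ℝ) - m) * ((n : ℝ) + m)) / ((2 * (n:ℝ) - 1) * (2 * (n:ℝ) + 1)) ≤ 1/4 := by
    rw [div_le_iff₀ (by nlinarith)]
    nlinarith
  calc aCoef n m ≤ Real.sqrt (1/4) := Real.sqrt_le_sqrt key
    _ = 1/2 := by
        rw [show (1/4:ℝ) = (1/2)^2 by norm_num, Real.sqrt_sq (by norm_num)]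

lemma aCoef_lb {p : ℕ} {m : ℤ} (hm : m ≠ 0) (hp : 2 ≤ p) (hmp : m.natAbs ≤ p) :
    1 - (m:ℝ)^2 / (((p:ℝ) - 1) * ((p:ℝ) + 1)) ≤ 2 * aCoef p m := by
  have hp1 : (2:ℝ) ≤ (p:ℝ) := by exact_mod_cast hp
  have hm1 : (1:ℝ) ≤ (m:ℝ)^2 := by
    have : 1 ≤ m.natAbs := Int.natAbs_pos.mpr hm
    have : (1:ℝ) ≤ |(m:ℝ)| := by rw [natAbs_cast_abs]; exact_mod_cast this
    nlinarith [abs_nonneg (m:ℝ), sq_abs (m:ℝ)]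
  have hmp' : (m:ℝ)^2 ≤ (p:ℝ)^2 := by
    have h1 : |(m:ℝ)| ≤ (p:ℝ) := by rw [natAbs_cast_abs]; exact_mod_cast hmp
    nlinarith [abs_nonneg (m:ℝ), sq_abs (m:ℝ)]
  set t := (m:ℝ)^2 / (((p:ℝ) - 1) * ((p:ℝ) + 1)) with ht
  rcases le_or_gt (1 - t) 0 with h | h
  · linarith [aCoef_nonneg p m]
  · have hden : (0:ℝ) < ((p:ℝ) - 1) * ((p:ℝ) + 1) := by nlinarith
    have hden2 : (0:ℝ) < (2 * (p:ℝ) - 1) * (2 * (p:ℝ) + 1) := by nlinarith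
    have ht1 : t * (((p:ℝ) - 1) * ((p:ℝ) + 1)) = (m:ℝ)^2 := by
      rw [ht]; exact div_mul_cancel₀ _ hden.ne'
    have key : ((1 - t)/2)^2 ≤ (((p:ℝ) - m) * ((p:ℝ) + m)) / ((2 * (p:ℝ) - 1) * (2 * (p:ℝ) + 1)) := by
      rw [le_div_iff₀ hden2]
      have htle : t ≤ 1 := by linarith
      have ht0 : 0 ≤ t := by positivity
      nlinarith [sq_nonneg (1 - t), sq_nonneg t, mul_pos hden hden2]
    have := Real.sqrt_le_sqrt key
    rw [Real.sqrt_sq (by linarith : (0:ℝ) ≤ (1-t)/2)] at this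
    unfold aCoef
    linarith

set_option maxHeartbeats 2000000 in
/-- Lemma `L:Ko_KerL` of the paper: on
`X = {u ∈ L²₀(S²) : (u,Y_n^0) = 0 (n ≥ 1), (u,Y_1^{±1}) = 0}`, the kernel of
`Λ = −i∂_φ M_{cos θ}(I + 6Δ^{−1})` equals `span{Y_2^m : |m| = 1,2}`.
Stated in coefficients: `u ∈ X` has the expansion
`u = Σ_{m ≠ 0} Σ_{n ≥ max(2,|m|)} c_n^m Y_n^m`, and since
`Λ Y_n^m = m(1 − 6/λ_n)(a_n^m Y_{n−1}^m + a_{n+1}^m Y_{n+1}^m)`, the kernel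
equation `Λu = 0` is equivalent to the vanishing of every coefficient of `Λu`; it
holds iff `u` is supported on the modes `Y_2^m` (which, by the support condition,
automatically have `|m| ∈ {1,2}` and `m ≠ 0`). -/
theorem stmt_14 (c : ℤ → ℕ → ℂ)
    (hm0 : ∀ n, c 0 n = 0)
    (hsupp : ∀ (m : ℤ) (n : ℕ), n < max 2 m.natAbs → c m n = 0)
    (hsum : Summable fun p : ℤ × ℕ => ‖c p.1 p.2‖ ^ 2) :
    (∀ (m : ℤ) (n : ℕ), 1 ≤ n →
        (0 : ℂ) = (m : ℂ) *
          ((((1 - 6 / lam (n + 1)) * aCoef (n + 1) m : ℝ) : ℂ) * c m (n + 1)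
            + (((1 - 6 / lam (n - 1)) * aCoef n m : ℝ) : ℂ) * c m (n - 1)))
      ↔ (∀ (m : ℤ) (n : ℕ), c m n ≠ 0 → n = 2) := by
  constructor
  · intro heq m n
    contrapose!
    intro hn2
    rcases eq_or_ne m 0 with rfl | hm
    · exact hm0 n
    set M := m.natAbs with hMdef
    have hM1 : 1 ≤ M := Int.natAbs_pos.mpr hm
    rcases lt_or_ge n (max 2 M) with hlt | hge
    · exact hsupp m n hlt
    by_contra hc
    have hn2' : 2 ≤ n := le_trans (le_max_left _ _) hge
    have hnM : M ≤ n := le_trans (le_max_right _ _) hge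
    set v : ℕ → ℂ := fun k => ((1 - 6 / lam k : ℝ) : ℂ) * c m k with hv
    have hmC : (m : ℂ) ≠ 0 := Int.cast_ne_zero.mpr hm
    -- basic recurrence
    have hrec : ∀ k : ℕ,
        ((aCoef (k+2) m : ℝ) : ℂ) * v (k+2) = -(((aCoef (k+1) m : ℝ) : ℂ) * v k) := by
      intro k
      have h := heq m (k+1) (by omega)
      have h2 : (((1 - 6 / lam (k+1+1)) * aCoef (k+1+1) m : ℝ) : ℂ) * c m (k+1+1)
          + (((1 - 6 / lam (k+1-1)) * aCoef (k+1) m : ℝ) : ℂ) * c m (k+1-1) = 0 := by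
        rcases mul_eq_zero.mp h.symm with h' | h'
        · exact absurd h' hmC
        · exact h'
      have e1 : k+1+1 = k+2 := rfl
      have e2 : k+1-1 = k := rfl
      rw [e1, e2] at h2
      simp only [hv]
      push_cast at h2 ⊢
      linear_combination h2
    have habs : ∀ k : ℕ,
        aCoef (k+2) m * ‖v (k+2)‖ = aCoef (k+1) m * ‖v k‖ := by
      intro k
      have h := congrArg (‖·‖) (hrec k)
      simpa [norm_mul, Complex.norm_real, Real.norm_eq_abs, abs_of_nonneg (aCoef_nonneg (k+2) m),
        abs_of_nonneg (aCoef_nonneg (k+1) m)] using h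
    -- one-step growth estimate
    have step2 : ∀ k : ℕ, M ≤ k → 2 ≤ k →
        (1 - (m:ℝ)^2 / ((k:ℝ) * ((k:ℝ)+2))) * ‖v k‖ ≤ ‖v (k+2)‖ := by
      intro k hMk h2k
      have ha2pos : 0 < aCoef (k+2) m := aCoef_pos (by omega)
      have ha2le : aCoef (k+2) m ≤ 1/2 := aCoef_le_half hm (by omega)
      have heqa := habs k
      have hva : (0:ℝ) ≤ ‖v k‖ := norm_nonneg _
      have hvb : (0:ℝ) ≤ ‖v (k+2)‖ := norm_nonneg _
      have hv2 : 2 * aCoef (k+1) m * ‖v k‖ ≤ ‖v (k+2)‖ := by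
        nlinarith [mul_nonneg (by linarith : (0:ℝ) ≤ 1 - 2 * aCoef (k+2) m) hvb]
      have hlb := aCoef_lb (p := k+1) hm (by omega) (by omega)
      have hcast : (((k+1 : ℕ):ℝ) - 1) * (((k+1 : ℕ):ℝ) + 1) = (k:ℝ) * ((k:ℝ)+2) := by
        push_cast; ring
      rw [hcast] at hlb
      nlinarith [mul_le_mul_of_nonneg_right hlb hva]
    -- chain estimate
    have hchain : ∀ n0 : ℕ, M ≤ n0 → 2 ≤ n0 → (m:ℝ)^2 ≤ (n0:ℝ) →
        ∀ k : ℕ, (1 - (m:ℝ)^2/2 * (1/(n0:ℝ) - 1/((n0:ℝ)+2*k))) * ‖v n0‖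
          ≤ ‖v (n0+2*k)‖ := by
      intro n0 hMn0 h2n0 hm2 k
      have hpos0 : (0:ℝ) < (n0:ℝ) := by positivity
      induction k with
      | zero => simp
      | succ k ih =>
        rw [show n0+2*(k+1) = (n0+2*k)+2 from by ring]
        have hstep := step2 (n0+2*k) (by omega) (by omega)
        have hN : ((n0 + 2*k : ℕ):ℝ) = (n0:ℝ) + 2*(k:ℝ) := by push_cast; ring
        rw [hN] at hstep
        set N : ℝ := (n0:ℝ) + 2*(k:ℝ) with hNdef
        have hNpos : 0 < N := by positivity
        have hva : (0:ℝ) ≤ ‖v n0‖ := norm_nonneg _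
        have hm2' : (m:ℝ)^2 ≤ N := by
          have : (0:ℝ) ≤ 2*(k:ℝ) := by positivity
          linarith
        have h1x : 0 ≤ 1 - (m:ℝ)^2 / (N * (N+2)) := by
          have hx : (m:ℝ)^2 / (N * (N+2)) ≤ 1 := by
            rw [div_le_one (by nlinarith)]
            nlinarith
          linarith
        have hS0 : 0 ≤ (m:ℝ)^2/2 * (1/(n0:ℝ) - 1/N) := by
          have h1 : 1/N ≤ 1/(n0:ℝ) := by
            apply one_div_le_one_div_of_le hpos0
            have : (0:ℝ) ≤ 2*(k:ℝ) := by positivity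
            linarith
          have := sq_nonneg (m:ℝ)
          nlinarith
        have hSx : 1 - (m:ℝ)^2/2 * (1/(n0:ℝ) - 1/((n0:ℝ)+2*((k:ℝ)+1)))
            = (1 - (m:ℝ)^2/2 * (1/(n0:ℝ) - 1/N)) - (m:ℝ)^2 / (N * (N+2)) := by
          have h2 : (n0:ℝ) + 2*((k:ℝ)+1) = N + 2 := by rw [hNdef]; ring
          rw [h2]
          field_simp
          ring
        have hgoal : ((n0:ℝ) + 2*((k+1 : ℕ):ℝ)) = (n0:ℝ) + 2*((k:ℝ)+1) := by push_cast; ring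
        have hkey := mul_le_mul_of_nonneg_left ih h1x
        have hxS : 0 ≤ ((m:ℝ)^2 / (N * (N+2))) * (((m:ℝ)^2/2 * (1/(n0:ℝ) - 1/N)) * ‖v n0‖) := by
          have hx0 : 0 ≤ (m:ℝ)^2 / (N * (N+2)) := by positivity
          exact mul_nonneg hx0 (mul_nonneg hS0 hva)
        have hc1 : ((k+1:ℕ):ℝ) = (k:ℝ)+1 := by push_cast; ring
        rw [hc1, hSx]
        have e : ((1 - (m:ℝ)^2/2 * (1/(n0:ℝ) - 1/N)) - (m:ℝ)^2 / (N * (N+2))) * ‖v n0‖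
            = (1 - (m:ℝ)^2 / (N * (N+2))) * ((1 - (m:ℝ)^2/2 * (1/(n0:ℝ) - 1/N)) * ‖v n0‖)
              - ((m:ℝ)^2 / (N * (N+2))) * (((m:ℝ)^2/2 * (1/(n0:ℝ) - 1/N)) * ‖v n0‖) := by
          ring
        linarith [hkey, hstep, hxS, e.le, e.ge]
    -- the fixed coefficient is nonzero
    have hfac : (1:ℝ) - 6 / lam n ≠ 0 := lamfac_ne (by omega) hn2
    have hvn : v n ≠ 0 := by
      simp only [hv]
      exact mul_ne_zero (Complex.ofReal_ne_zero.mpr hfac) hc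
    -- propagation of nonvanishing
    have hprop : ∀ k : ℕ, v (n + 2*k) ≠ 0 := by
      intro k
      induction k with
      | zero => simpa using hvn
      | succ k ih =>
        rw [show n+2*(k+1) = (n+2*k)+2 from by ring]
        intro h0
        have hr := hrec (n+2*k)
        rw [h0, mul_zero] at hr
        have ha1 : ((aCoef (n+2*k+1) m : ℝ):ℂ) ≠ 0 :=
          Complex.ofReal_ne_zero.mpr (ne_of_gt (aCoef_pos (by omega)))
        have : ((aCoef (n+2*k+1) m : ℝ):ℂ) * v (n+2*k) = 0 := by
          have := hr.symm
          linear_combination -this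
        exact ih ((mul_eq_zero.mp this).resolve_left ha1)
    -- choose a far enough starting point
    set n0 : ℕ := n + 2*(M^2) with hn0def
    have hn0M : M ≤ n0 := by omega
    have hn02 : 2 ≤ n0 := by omega
    have hm2n0 : (m:ℝ)^2 ≤ (n0:ℝ) := by
      have h1 : (m:ℝ)^2 = ((M^2 : ℕ):ℝ) := by
        rw [hMdef]; push_cast [Nat.cast_natAbs]; rw [sq_abs]
      rw [h1]
      exact_mod_cast Nat.le_of_lt_succ (by omega)
    have hvn0 : v n0 ≠ 0 := hprop (M^2)
    have hεpos : 0 < ‖v n0‖ := norm_pos_iff.mpr hvn0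
    have hlow : ∀ k : ℕ, (1/2) * ‖v n0‖ ≤ ‖v (n0+2*k)‖ := by
      intro k
      have hch := hchain n0 hn0M hn02 hm2n0 k
      have hpos0 : (0:ℝ) < (n0:ℝ) := by positivity
      have hposk : (0:ℝ) < (n0:ℝ) + 2*(k:ℝ) := by positivity
      have hS : (m:ℝ)^2/2 * (1/(n0:ℝ) - 1/((n0:ℝ)+2*(k:ℝ))) ≤ 1/2 := by
        have h1 : (m:ℝ)^2 / (n0:ℝ) ≤ 1 := (div_le_one hpos0).mpr hm2n0
        have h2 : 0 < 1/((n0:ℝ)+2*(k:ℝ)) := by positivity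
        have h3 : 0 ≤ (m:ℝ)^2 := sq_nonneg _
        have h4 : (m:ℝ)^2/2 * (1/(n0:ℝ)) ≤ 1/2 := by
          have e : (m:ℝ)^2/2 * (1/(n0:ℝ)) = ((m:ℝ)^2/(n0:ℝ))/2 := by ring
          rw [e]; linarith
        nlinarith
      nlinarith [norm_nonneg (v n0)]
    -- summability of the subfamily, contradiction
    have hsub : Summable (fun k : ℕ => ‖c m (n0 + 2*k)‖^2) := by
      have hinj : Function.Injective (fun k : ℕ => ((m, n0 + 2*k) : ℤ × ℕ)) := by
        intro a b hab
        simp only [Prod.mk.injEq] at hab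
        omega
      have h := hsum.comp_injective hinj
      exact h
    have htend := hsub.tendsto_atTop_zero
    have hbound : ∀ k : ℕ, (‖v n0‖/8)^2 ≤ ‖c m (n0+2*k)‖^2 := by
      intro k
      have h1 := hlow k
      have h2 : ‖v (n0+2*k)‖ ≤ 4 * ‖c m (n0+2*k)‖ := by
        have hl := lamfac_abs_le (n := n0+2*k) (by omega)
        have h0 : (0:ℝ) ≤ ‖c m (n0+2*k)‖ := norm_nonneg _
        simp only [hv, norm_mul, Complex.norm_real, Real.norm_eq_abs] at *
        nlinarith [abs_nonneg ((1:ℝ) - 6 / lam (n0+2*k))]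
      have h3 : ‖v n0‖/8 ≤ ‖c m (n0+2*k)‖ := by linarith
      nlinarith [norm_nonneg (c m (n0+2*k))]
    have hev : ∀ᶠ k in Filter.atTop, ‖c m (n0+2*k)‖^2 < (‖v n0‖/8)^2 :=
      htend.eventually_lt_const (pow_pos (div_pos hεpos (by norm_num)) 2)
    obtain ⟨k, hk⟩ := hev.exists
    linarith [hbound k]
  · intro h m n hn
    have hT1 : (((1 - 6 / lam (n + 1)) * aCoef (n + 1) m : ℝ) : ℂ) * c m (n + 1) = 0 := by
      rcases eq_or_ne (n+1) 2 with h2 | h2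
      · rw [h2]
        norm_num [lam_two]
      · rw [of_not_not (fun hcc => h2 (h m (n+1) hcc)), mul_zero]
    have hT2 : (((1 - 6 / lam (n - 1)) * aCoef n m : ℝ) : ℂ) * c m (n - 1) = 0 := by
      rcases eq_or_ne (n-1) 2 with h2 | h2
      · rw [h2]
        norm_num [lam_two]
      · rw [of_not_not (fun hcc => h2 (h m (n-1) hcc)), mul_zero]
    rw [hT1, hT2]
    ring
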